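/- Preservation of the Dwork–Frobenius congruences under the cyclotomic norm: Let R be a commutative ring and m, m' positive integers with m | m'. Assume that for every prime p dividing m' there is a ring homomorphism φ_p : R → R/p^{v_p(m')}R with φ_p(x) ≡ x^p modulo pR, extended coefficientwise to polynomial rings. Let (c̃_e(q))_{e|m} be a family of polynomials in R[q] such that for every prime p and every integer e ≥ 1 with pe | m, c̃_e(q) ≡ φ_p(c̃_{pe}(q)) in (R/p^{v_p(m/e)}R)[q]. For every divisor e of m' set c̃'_e(q) := c̃_{gcd(e,m)}(q^{e/gcd(e,m)})^{m'/lcm(e,m)}. Then for every prime p and every integer e ≥ 1 with pe | m', one has c̃'_e(q) ≡ φ_p(c̃'_{pe}(q)) in (R/p^{v_p(m'/e)}R)[q]. -/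

import Mathlib

open Polynomial

/-- The canonical projection `R/p^a R → R/p^b R` for `b ≤ a`. -/
def padicProj {R : Type*} [CommRing R] (p : R) {a b : ℕ} (h : b ≤ a) :
    R ⧸ Ideal.span {p ^ a} →+* R ⧸ Ideal.span {p ^ b} :=
  Ideal.Quotient.factor (Ideal.span_singleton_le_span_singleton.mpr (pow_dvd_pow p h))

/-- Monotonicity of `p`-adic valuations along divisibility. -/
theorem factorization_le_of_dvd_aux {a b : ℕ} (hb : b ≠ 0) (h : a ∣ b) (p : ℕ) :
    a.factorization p ≤ b.factorization p := by
  rcases eq_or_ne a 0 with rfl | ha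
  · exact absurd (zero_dvd_iff.mp h) hb
  · exact (Nat.factorization_le_iff_dvd ha hb).mpr h p

lemma geom_step {S : Type*} [CommRing S] (p : ℕ) {a b : S} {s : ℕ} (hs : 1 ≤ s)
    (h : (p:S)^s ∣ a - b) : (p:S)^(s+1) ∣ a^p - b^p := by
  have hgeom : (∑ i ∈ Finset.range p, a ^ i * b ^ (p - 1 - i)) * (a - b) = a ^ p - b ^ p :=
    geom_sum₂_mul a b p
  have h1 : (p:S) ∣ a - b := (pow_one (p:S) ▸ pow_dvd_pow (p:S) hs).trans h
  have hsplit : (∑ i ∈ Finset.range p, a^i*b^(p-1-i)) =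
      (∑ i ∈ Finset.range p, (a^i - b^i)*b^(p-1-i)) + ∑ i ∈ Finset.range p, b^i*b^(p-1-i) := by
    rw [← Finset.sum_add_distrib]
    exact Finset.sum_congr rfl fun i _ => by ring
  have h2 : (p:S) ∣ ∑ i ∈ Finset.range p, a^i*b^(p-1-i) := by
    rw [hsplit]
    refine dvd_add (Finset.dvd_sum fun i _ => dvd_mul_of_dvd_left
      (h1.trans (sub_dvd_pow_sub_pow a b i)) _) ?_
    have hlast : ∑ i ∈ Finset.range p, b^i*b^(p-1-i) = p * b^(p-1) := by
      rw [Finset.sum_congr rfl (fun i hi => ?_), Finset.sum_const, Finset.card_range,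
        nsmul_eq_mul]
      rw [← pow_add]
      congr 1
      have := Finset.mem_range.mp hi
      omega
    rw [hlast]
    exact dvd_mul_right _ _
  calc (p:S)^(s+1) = (p:S) * (p:S)^s := by ring
    _ ∣ (∑ i ∈ Finset.range p, a^i*b^(p-1-i)) * (a - b) := mul_dvd_mul h2 h
    _ = a^p - b^p := hgeom

lemma pow_cong {S : Type*} [CommRing S] (p : ℕ) {a b : S} {s : ℕ} (hs : 1 ≤ s)
    (h : (p:S)^s ∣ a - b) (k t : ℕ) : (p:S)^(s+k) ∣ a^(p^k*t) - b^(p^k*t) := by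
  have hk : (p:S)^(s+k) ∣ a^(p^k) - b^(p^k) := by
    induction k with
    | zero => simpa using h
    | succ k ih =>
      have := geom_step p (hs.trans (Nat.le_add_right s k)) ih
      rwa [← pow_mul, ← pow_mul, ← pow_succ, show s + k + 1 = s + (k+1) by omega] at this
  rw [pow_mul, pow_mul]
  exact hk.trans (sub_dvd_pow_sub_pow _ _ t)

noncomputable def pfrob {S : Type*} [CommRing S] (p : ℕ) (F : S[X]) : S[X] :=
  F.sum fun i a => Polynomial.monomial i (a ^ p)

lemma pfrob_coeff {S : Type*} [CommRing S] {p : ℕ} (hp : 0 < p) (F : S[X]) (j : ℕ) :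
    (pfrob p F).coeff j = (F.coeff j)^p := by
  rw [pfrob, Polynomial.sum_def, Polynomial.finset_sum_coeff]
  simp_rw [Polynomial.coeff_monomial]
  rw [Finset.sum_ite_eq' F.support j fun i => (F.coeff i)^p]
  by_cases hj : j ∈ F.support
  · simp [hj]
  · simp [hj, Polynomial.notMem_support_iff.mp hj, zero_pow hp.ne']

lemma pfrob_monomial {S : Type*} [CommRing S] {p : ℕ} (hp : 0 < p) (j : ℕ) (a : S) :
    pfrob p (monomial j a) = monomial j (a^p) :=
  Polynomial.sum_monomial_index a _ (by rw [zero_pow hp.ne', map_zero])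

lemma frob_expand_dvd {S : Type*} [CommRing S] {p : ℕ} (hp : p.Prime) (n : ℕ) (F : S[X]) :
    (p : S[X]) ∣ (Polynomial.expand S n F)^p - Polynomial.expand S (p*n) (pfrob p F) := by
  induction F using Polynomial.induction_on' with
  | monomial j a =>
    rw [pfrob_monomial hp.pos, Polynomial.expand_monomial, Polynomial.expand_monomial,
      Polynomial.monomial_pow, show j*n*p = j*(p*n) by ring]
    simp
  | add F G ihF ihG =>
    obtain ⟨u, hu⟩ := ihF
    obtain ⟨v, hv⟩ := ihG
    obtain ⟨r, hr⟩ := exists_add_pow_prime_eq hp (expand S n F) (expand S n G)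
    have hco : Polynomial.C (p:S) ∣ pfrob p (F+G) - (pfrob p F + pfrob p G) := by
      rw [Polynomial.C_dvd_iff_dvd_coeff]
      intro i
      simp only [Polynomial.coeff_add, Polynomial.coeff_sub, pfrob_coeff hp.pos]
      obtain ⟨w, hw⟩ := exists_add_pow_prime_eq hp (F.coeff i) (G.coeff i)
      exact ⟨F.coeff i * G.coeff i * w, by rw [hw]; ring⟩
    obtain ⟨w, hw⟩ := hco
    refine ⟨expand S n F * expand S n G * r + u + v - expand S (p*n) w, ?_⟩
    have h1 : pfrob p (F+G) = pfrob p F + pfrob p G + Polynomial.C (p:S) * w := by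
      rw [← hw]; ring
    rw [map_add, h1]
    simp only [map_add, map_mul, Polynomial.expand_C, Polynomial.C_eq_natCast, map_natCast]
    linear_combination hr + hu + hv

lemma expand_pow_prime_dvd {S : Type*} [CommRing S] {p : ℕ} (hp : p.Prime) (n : ℕ) (F G : S[X])
    (h : ∀ i, (p:S) ∣ G.coeff i - (F.coeff i)^p) :
    (p : S[X]) ∣ (Polynomial.expand S n F)^p - Polynomial.expand S (p*n) G := by
  have h2 : (p:S[X]) ∣ Polynomial.expand S (p*n) G - Polynomial.expand S (p*n) (pfrob p F) := by
    have hC : Polynomial.C (p:S) ∣ G - pfrob p F := by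
      rw [Polynomial.C_dvd_iff_dvd_coeff]
      intro i
      rw [Polynomial.coeff_sub, pfrob_coeff hp.pos]
      exact h i
    obtain ⟨w, hw⟩ := hC
    exact ⟨expand S (p*n) w, by
      rw [← map_sub, hw, map_mul, Polynomial.expand_C, Polynomial.C_eq_natCast]⟩
  have h4 := dvd_sub (frob_expand_dvd hp n F) h2
  rwa [sub_sub_sub_cancel_right] at h4

lemma mk_pow_dvd_of_eq {R : Type*} [CommRing R] (r : R) (s b : ℕ) {x z : R}
    (h : Ideal.Quotient.mk (Ideal.span {r^s}) x = Ideal.Quotient.mk (Ideal.span {r^s}) z) :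
    (Ideal.Quotient.mk (Ideal.span {r^b}) r)^s ∣
      Ideal.Quotient.mk (Ideal.span {r^b}) x - Ideal.Quotient.mk (Ideal.span {r^b}) z := by
  have hd : r^s ∣ x - z := by
    rw [← Ideal.mem_span_singleton]
    exact (Ideal.Quotient.eq).mp h
  obtain ⟨w, hw⟩ := hd
  exact ⟨Ideal.Quotient.mk _ w, by rw [← map_pow, ← map_mul, ← hw, map_sub]⟩

lemma transfer {R : Type*} [CommRing R] {r : R} {A s b : ℕ} (hsA : s ≤ A) (hbA : b ≤ A)
    (u : R ⧸ Ideal.span {r^A}) {x : R}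
    (h : Ideal.Quotient.mk (Ideal.span {r^s}) x = padicProj r hsA u) :
    (Ideal.Quotient.mk (Ideal.span {r^b}) r)^s ∣
      Ideal.Quotient.mk (Ideal.span {r^b}) x - padicProj r hbA u := by
  obtain ⟨z, rfl⟩ := Ideal.Quotient.mk_surjective u
  rw [padicProj, Ideal.Quotient.factor_mk] at h ⊢
  exact mk_pow_dvd_of_eq r s b h

lemma eq_of_pow_b_dvd {R : Type*} [CommRing R] (p : ℕ) (b : ℕ)
    {A B : (R ⧸ Ideal.span {(p:R)^b})[X]}
    (h : ((p:ℕ) : (R ⧸ Ideal.span {(p:R)^b})[X])^b ∣ A - B) : A = B := by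
  obtain ⟨w, hw⟩ := h
  have hz : ((p:ℕ) : (R ⧸ Ideal.span {(p:R)^b}))^b = 0 := by
    rw [← map_natCast (Ideal.Quotient.mk (Ideal.span {(p:R)^b})) p, ← map_pow,
      Ideal.Quotient.eq_zero_iff_mem]
    exact Ideal.mem_span_singleton_self _
  have hz2 : ((p:ℕ) : (R ⧸ Ideal.span {(p:R)^b})[X])^b = 0 := by
    rw [← Polynomial.C_eq_natCast, ← map_pow, hz, map_zero]
  have : A - B = 0 := by rw [hw, hz2, zero_mul]
  exact sub_eq_zero.mp this

/-- Preservation of the Dwork–Frobenius congruences under the cyclotomic norm: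
if the family `(c̃_e(q))_{e ∣ m}` satisfies `c̃_e(q) ≡ φ_p(c̃_{pe}(q))` in
`(R/p^{v_p(m/e)}R)[q]` whenever `pe ∣ m`, then the family
`c̃'_e(q) := c̃_{gcd(e,m)}(q^{e/gcd(e,m)})^{m'/lcm(e,m)}`, for `e ∣ m'`, satisfies
`c̃'_e(q) ≡ φ_p(c̃'_{pe}(q))` in `(R/p^{v_p(m'/e)}R)[q]` whenever `pe ∣ m'`. -/
theorem cyclotomicNorm_preserves_dwork_congruences {R : Type*} [CommRing R]
    (m m' : ℕ) (hm : 0 < m) (hm' : 0 < m') (hmm' : m ∣ m')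
    (φ : ∀ p : ℕ, p.Prime → p ∣ m' → R →+* R ⧸ Ideal.span {(p : R) ^ m'.factorization p})
    (hφ : ∀ (p : ℕ) (hp : p.Prime) (hpm : p ∣ m') (x : R),
      padicProj (p : R) (by exact hp.factorization_pos_of_dvd hm'.ne' hpm)
          (φ p hp hpm x) =
        Ideal.Quotient.mk (Ideal.span {(p : R) ^ 1}) (x ^ p))
    (c : ℕ → Polynomial R)
    (hc : ∀ (p : ℕ) (hp : p.Prime) (e : ℕ) (he : 1 ≤ e) (hpe : p * e ∣ m),
      (c e).map (Ideal.Quotient.mk (Ideal.span {(p : R) ^ (m / e).factorization p})) =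
        (c (p * e)).map
          ((padicProj (p : R)
              (factorization_le_of_dvd_aux hm'.ne'
                ((Nat.div_dvd_of_dvd ((dvd_mul_left e p).trans hpe)).trans hmm') p)).comp
            (φ p hp (((dvd_mul_right p e).trans hpe).trans hmm'))))
    (c' : ℕ → Polynomial R)
    (hc' : ∀ e : ℕ,
      c' e = (Polynomial.expand R (e / Nat.gcd e m) (c (Nat.gcd e m))) ^ (m' / Nat.lcm e m)) :
    ∀ (p : ℕ) (hp : p.Prime) (e : ℕ) (he : 1 ≤ e) (hpe : p * e ∣ m'),
      (c' e).map (Ideal.Quotient.mk (Ideal.span {(p : R) ^ (m' / e).factorization p})) =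
        (c' (p * e)).map
          ((padicProj (p : R)
              (factorization_le_of_dvd_aux hm'.ne'
                (Nat.div_dvd_of_dvd ((dvd_mul_left e p).trans hpe)) p)).comp
            (φ p hp ((dvd_mul_right p e).trans hpe))) := by
  intro p hp e he hpe
  classical
  have he0 : e ≠ 0 := by omega
  have hg0 : 0 < Nat.gcd e m := Nat.gcd_pos_of_pos_left m he
  have hge : Nat.gcd e m ∣ e := Nat.gcd_dvd_left e m
  have hgm : Nat.gcd e m ∣ m := Nat.gcd_dvd_right e m
  have hem' : e ∣ m' := (dvd_mul_left e p).trans hpe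
  have hpm' : p ∣ m' := (dvd_mul_right p e).trans hpe
  have hLdvd : Nat.lcm e m ∣ m' := Nat.lcm_dvd hem' hmm'
  have hL0 : Nat.lcm e m ≠ 0 := Nat.lcm_ne_zero he0 hm.ne'
  have hmg0 : m / Nat.gcd e m ≠ 0 := (Nat.div_pos (Nat.le_of_dvd hm hgm) hg0).ne'
  have hlcm_eq : Nat.lcm e m = e * (m / Nat.gcd e m) := by
    apply Nat.eq_of_mul_eq_mul_left hg0
    calc Nat.gcd e m * Nat.lcm e m = e * m := Nat.gcd_mul_lcm e m
      _ = e * (Nat.gcd e m * (m / Nat.gcd e m)) := by rw [Nat.mul_div_cancel' hgm]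
      _ = Nat.gcd e m * (e * (m / Nat.gcd e m)) := by ring
  have hbA : (m'/e).factorization p ≤ m'.factorization p :=
    factorization_le_of_dvd_aux hm'.ne' (Nat.div_dvd_of_dvd hem') p
  have hbeq : (m'/e).factorization p = m'.factorization p - e.factorization p := by
    rw [Nat.factorization_div hem', Finsupp.tsub_apply]
  have hveA : e.factorization p ≤ m'.factorization p :=
    factorization_le_of_dvd_aux hm'.ne' hem' p
  have hvLA : (Nat.lcm e m).factorization p ≤ m'.factorization p :=
    factorization_le_of_dvd_aux hm'.ne' hLdvd p
  have hvL : (Nat.lcm e m).factorization p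
      = e.factorization p + (m / Nat.gcd e m).factorization p := by
    rw [hlcm_eq, Nat.factorization_mul he0 hmg0, Finsupp.add_apply]
  have hpeA : 1 + e.factorization p ≤ m'.factorization p := by
    have h1 := factorization_le_of_dvd_aux hm'.ne' hpe p
    rwa [Nat.factorization_mul hp.pos.ne' he0, Finsupp.add_apply, hp.factorization,
      Finsupp.single_eq_same] at h1
  have hN0 : m' / Nat.lcm e m ≠ 0 :=
    (Nat.div_pos (Nat.le_of_dvd hm' hLdvd) (Nat.pos_of_ne_zero hL0)).ne'
  by_cases hcase : p * Nat.gcd e m ∣ m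
  · -- Case A
    have hgcd : Nat.gcd (p*e) m = p * Nat.gcd e m := by
      refine Nat.dvd_antisymm ?_ (Nat.dvd_gcd (mul_dvd_mul_left p hge) hcase)
      have h1 : Nat.gcd (p*e) m ∣ Nat.gcd (p*e) (p*m) :=
        Nat.dvd_gcd (Nat.gcd_dvd_left _ _) ((Nat.gcd_dvd_right _ _).trans (dvd_mul_left m p))
      rwa [Nat.gcd_mul_left] at h1
    have hlcmA : Nat.lcm (p*e) m = Nat.lcm e m := by
      have hpg0 : 0 < p * Nat.gcd e m := Nat.mul_pos hp.pos hg0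
      apply Nat.eq_of_mul_eq_mul_left hpg0
      have h1 : Nat.gcd (p*e) m * Nat.lcm (p*e) m = (p*e)*m := Nat.gcd_mul_lcm _ _
      rw [hgcd] at h1
      calc (p * Nat.gcd e m) * Nat.lcm (p*e) m = p*e*m := h1
        _ = p*(Nat.gcd e m * Nat.lcm e m) := by rw [Nat.gcd_mul_lcm]; ring
        _ = (p * Nat.gcd e m) * Nat.lcm e m := by ring
    have hdivA : p*e/(p*Nat.gcd e m) = e/Nat.gcd e m := Nat.mul_div_mul_left _ _ hp.pos
    have hpmg : p ∣ m / Nat.gcd e m := by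
      rw [Nat.dvd_div_iff_mul_dvd hgm]
      rwa [mul_comm]
    have hs1 : 1 ≤ (m / Nat.gcd e m).factorization p :=
      hp.factorization_pos_of_dvd hmg0 hpmg
    have hcg := hc p hp (Nat.gcd e m) hg0 hcase
    rw [hc' e, hc' (p*e), hgcd, hlcmA, hdivA, Polynomial.map_pow, Polynomial.map_pow,
      Polynomial.map_expand, Polynomial.map_expand]
    refine eq_of_pow_b_dvd p ((m'/e).factorization p) ?_
    have base : ∀ i, ((Ideal.Quotient.mk (Ideal.span {(p:R)^(m'/e).factorization p}) (p:R))
          ^((m/Nat.gcd e m).factorization p)) ∣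
        Ideal.Quotient.mk (Ideal.span {(p:R)^(m'/e).factorization p})
            ((c (Nat.gcd e m)).coeff i)
          - (padicProj (p:R) hbA) (φ p hp hpm' ((c (p*Nat.gcd e m)).coeff i)) := by
      intro i
      have hcoeff := congrArg (fun f => f.coeff i) hcg
      simp only [Polynomial.coeff_map, RingHom.comp_apply] at hcoeff
      exact transfer _ hbA _ hcoeff
    have basePoly : ((p:ℕ) : (R ⧸ Ideal.span {(p:R)^(m'/e).factorization p})[X])
          ^((m/Nat.gcd e m).factorization p) ∣
        (c (Nat.gcd e m)).map (Ideal.Quotient.mk (Ideal.span {(p:R)^(m'/e).factorization p}))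
          - (c (p*Nat.gcd e m)).map ((padicProj (p:R) hbA).comp (φ p hp hpm')) := by
      have hC := (Polynomial.C_dvd_iff_dvd_coeff
        ((Ideal.Quotient.mk (Ideal.span {(p:R)^(m'/e).factorization p}) (p:R))
          ^((m/Nat.gcd e m).factorization p))
        ((c (Nat.gcd e m)).map (Ideal.Quotient.mk (Ideal.span {(p:R)^(m'/e).factorization p}))
          - (c (p*Nat.gcd e m)).map ((padicProj (p:R) hbA).comp (φ p hp hpm')))).mpr
        (fun i => by
          rw [Polynomial.coeff_sub, Polynomial.coeff_map, Polynomial.coeff_map,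
            RingHom.comp_apply]
          exact base i)
      rwa [map_pow, map_natCast, Polynomial.C_eq_natCast] at hC
    obtain ⟨w, hw⟩ := basePoly
    have baseExp : ((p:ℕ) : (R ⧸ Ideal.span {(p:R)^(m'/e).factorization p})[X])
          ^((m/Nat.gcd e m).factorization p) ∣
        Polynomial.expand _ (e/Nat.gcd e m) ((c (Nat.gcd e m)).map
            (Ideal.Quotient.mk (Ideal.span {(p:R)^(m'/e).factorization p})))
          - Polynomial.expand _ (e/Nat.gcd e m) ((c (p*Nat.gcd e m)).map
            ((padicProj (p:R) hbA).comp (φ p hp hpm'))) :=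
      ⟨Polynomial.expand _ (e/Nat.gcd e m) w, by
        rw [← map_sub, hw, map_mul, map_pow, map_natCast]⟩
    have final := pow_cong p hs1 baseExp ((m'/Nat.lcm e m).factorization p)
      ((m'/Nat.lcm e m)/p^((m'/Nat.lcm e m).factorization p))
    rw [Nat.ordProj_mul_ordCompl_eq_self] at final
    have hkk : (m'/Nat.lcm e m).factorization p
        = m'.factorization p - (Nat.lcm e m).factorization p := by
      rw [Nat.factorization_div hLdvd, Finsupp.tsub_apply]
    refine (pow_dvd_pow _ ?_).trans final
    omega
  · -- Case B
    have hdg : Nat.gcd (p*e) m ∣ p * Nat.gcd e m := by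
      have h1 : Nat.gcd (p*e) m ∣ Nat.gcd (p*e) (p*m) :=
        Nat.dvd_gcd (Nat.gcd_dvd_left _ _) ((Nat.gcd_dvd_right _ _).trans (dvd_mul_left m p))
      rwa [Nat.gcd_mul_left] at h1
    have hgd : Nat.gcd e m ∣ Nat.gcd (p*e) m :=
      Nat.dvd_gcd (hge.trans (dvd_mul_left e p)) hgm
    have hgcdB : Nat.gcd (p*e) m = Nat.gcd e m := by
      obtain ⟨d, hd⟩ := hgd
      have hdp : d ∣ p := by
        have h2 : Nat.gcd e m * d ∣ Nat.gcd e m * p := by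
          rw [← hd, mul_comm (Nat.gcd e m) p]; exact hdg
        exact (Nat.mul_dvd_mul_iff_left hg0).mp h2
      rcases (Nat.Prime.eq_one_or_self_of_dvd hp d hdp) with h1 | h1
      · rw [hd, h1, mul_one]
      · exfalso
        apply hcase
        have hmm : Nat.gcd (p*e) m ∣ m := Nat.gcd_dvd_right _ _
        rw [hd, h1] at hmm
        rwa [mul_comm]
    have hlcmB : Nat.lcm (p*e) m = p * Nat.lcm e m := by
      apply Nat.eq_of_mul_eq_mul_left hg0
      have h1 : Nat.gcd (p*e) m * Nat.lcm (p*e) m = (p*e)*m := Nat.gcd_mul_lcm _ _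
      rw [hgcdB] at h1
      calc Nat.gcd e m * Nat.lcm (p*e) m = p*e*m := h1
        _ = p*(Nat.gcd e m * Nat.lcm e m) := by rw [Nat.gcd_mul_lcm]; ring
        _ = Nat.gcd e m * (p * Nat.lcm e m) := by ring
    have hdivB : p*e/Nat.gcd e m = p*(e/Nat.gcd e m) := Nat.mul_div_assoc p hge
    have hpL : p * Nat.lcm e m ∣ m' := by rw [← hlcmB]; exact Nat.lcm_dvd hpe hmm'
    have hNsplit : m' / Nat.lcm e m = p * (m' / (p * Nat.lcm e m)) := by
      obtain ⟨q, hq⟩ := hpL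
      rw [hq, show p * Nat.lcm e m * q = Nat.lcm e m * (p*q) by ring,
        Nat.mul_div_cancel_left _ (Nat.pos_of_ne_zero hL0),
        show Nat.lcm e m * (p*q) = (p*Nat.lcm e m) * q by ring,
        Nat.mul_div_cancel_left _ (Nat.mul_pos hp.pos (Nat.pos_of_ne_zero hL0))]
    have hndvd : ¬ p ∣ m / Nat.gcd e m := by
      intro hdv
      apply hcase
      have h2 := (Nat.dvd_div_iff_mul_dvd hgm).mp hdv
      rwa [mul_comm]
    have hs0 : (m / Nat.gcd e m).factorization p = 0 :=
      Nat.factorization_eq_zero_of_not_dvd hndvd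
    rw [hc' e, hc' (p*e), hgcdB, hlcmB, hdivB, hNsplit, Polynomial.map_pow, Polynomial.map_pow,
      Polynomial.map_expand, Polynomial.map_expand]
    refine eq_of_pow_b_dvd p ((m'/e).factorization p) ?_
    have hcoeffB : ∀ i, ((p:ℕ) : R ⧸ Ideal.span {(p:R)^(m'/e).factorization p}) ∣
        ((c (Nat.gcd e m)).map ((padicProj (p:R) hbA).comp (φ p hp hpm'))).coeff i
          - (((c (Nat.gcd e m)).map
              (Ideal.Quotient.mk (Ideal.span {(p:R)^(m'/e).factorization p}))).coeff i)^p := by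
      intro i
      have h := (hφ p hp hpm' ((c (Nat.gcd e m)).coeff i)).symm
      have h2 := transfer (hp.factorization_pos_of_dvd hm'.ne' hpm') hbA _ h
      rw [pow_one, map_pow] at h2
      rw [Polynomial.coeff_map, Polynomial.coeff_map, RingHom.comp_apply]
      have h3 := (dvd_neg).mpr h2
      rw [neg_sub] at h3
      rwa [map_natCast (Ideal.Quotient.mk (Ideal.span {(p:R)^(m'/e).factorization p})) p] at h3
    have key := expand_pow_prime_dvd hp (e/Nat.gcd e m)
      ((c (Nat.gcd e m)).map (Ideal.Quotient.mk (Ideal.span {(p:R)^(m'/e).factorization p})))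
      ((c (Nat.gcd e m)).map ((padicProj (p:R) hbA).comp (φ p hp hpm'))) hcoeffB
    rw [← pow_one ((p:ℕ) : (R ⧸ Ideal.span {(p:R)^(m'/e).factorization p})[X])] at key
    have final := pow_cong p le_rfl key ((m'/(p*Nat.lcm e m)).factorization p)
      ((m'/(p*Nat.lcm e m))/p^((m'/(p*Nat.lcm e m)).factorization p))
    rw [Nat.ordProj_mul_ordCompl_eq_self, ← pow_mul] at final
    have hk' : (m'/(p*Nat.lcm e m)).factorization p
        = m'.factorization p - (p*Nat.lcm e m).factorization p := by
      rw [Nat.factorization_div hpL, Finsupp.tsub_apply]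
    have hvpL : (p*Nat.lcm e m).factorization p = 1 + (Nat.lcm e m).factorization p := by
      rw [Nat.factorization_mul hp.pos.ne' hL0, Finsupp.add_apply, hp.factorization,
        Finsupp.single_eq_same]
    refine (pow_dvd_pow _ ?_).trans final
    omega
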